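/- Under assumptions (E1), (E2), and the locality assumption (LOC), E_{ab}(D1D2) = ∫_Ω 𝐚·𝐛 dP, where 𝐚 := μ_{A=a}({D1 = +1} | λ) − μ_{A=a}({D1 = −1} | λ) and 𝐛 := μ_{B=b}({D2 = +1} | λ) − μ_{B=b}({D2 = −1} | λ). -/

import Mathlib

open MeasureTheory ProbabilityTheory

/-- Conditional probability of the event `E` given the sub-σ-algebra `m`:
the conditional expectation of the indicator function of `E`. -/
noncomputable def cprob {Ω : Type*} [MeasurableSpace Ω] (P : Measure Ω)
    (m : MeasurableSpace Ω) (E : Set Ω) : Ω → ℝ :=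
  P[E.indicator (fun _ => (1 : ℝ)) | m]

/-- `μ_X(Y | λ) := (1 / P(X)) · P(Y ∩ X | m)` where `m` is a sub-σ-algebra
(in applications, `m = σ(λ)`). -/
noncomputable def muC {Ω : Type*} [F : MeasurableSpace Ω] (P : Measure Ω)
    (m : MeasurableSpace Ω) (X Y : Set Ω) : Ω → ℝ :=
  fun ω => (1 / (P X).toReal) * @cprob Ω F P m (Y ∩ X) ω

lemma cprob_integral {Ω : Type*} {m : MeasurableSpace Ω} [F : MeasurableSpace Ω]
    (P : Measure Ω) [IsProbabilityMeasure P] (hm : m ≤ F) {E : Set Ω} (hE : MeasurableSet E) :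
    ∫ ω, cprob P m E ω ∂P = (P E).toReal := by
  rw [cprob, integral_condExp hm, integral_indicator_const _ hE, smul_eq_mul, mul_one, measureReal_def]

lemma indicator_setint {Ω : Type*} [F : MeasurableSpace Ω] (P : Measure Ω) [IsProbabilityMeasure P]
    {U : Set Ω} (S : Set Ω) (hU : MeasurableSet U) :
    ∫ ω in S, U.indicator (fun _ => (1:ℝ)) ω ∂P = (P (U ∩ S)).toReal := by
  rw [integral_indicator_const _ hU, smul_eq_mul, mul_one, measureReal_def, Measure.restrict_apply hU]

theorem stmt2_aux {Ω : Type*} {m : MeasurableSpace Ω} [F : MeasurableSpace Ω]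
    (P : Measure Ω) [IsProbabilityMeasure P] (hm : m ≤ F)
    (A B : Ω → Bool) (hA : Measurable A) (hB : Measurable B)
    (D1 D2 : Ω → ℝ) (hD1 : Measurable D1) (hD2 : Measurable D2)
    (hD1v : ∀ ω, D1 ω = 1 ∨ D1 ω = -1) (hD2v : ∀ ω, D2 ω = 1 ∨ D2 ω = -1)
    (hE1 : IndepFun A B P)
    (hLOC : ∀ s t : ℝ,
      cprob P m (({ω | D1 ω = s} ∩ {ω | A ω = true}) ∩ ({ω | D2 ω = t} ∩ {ω | B ω = true})) =ᵐ[P]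
        fun ω => cprob P m ({ω | D1 ω = s} ∩ {ω | A ω = true}) ω *
          cprob P m ({ω | D2 ω = t} ∩ {ω | B ω = true}) ω) :
    ∫ ω, D1 ω * D2 ω ∂(P[|{ω | A ω = true} ∩ {ω | B ω = true}]) =
      ∫ ω, (muC P m {ω | A ω = true} {ω | D1 ω = 1} ω - muC P m {ω | A ω = true} {ω | D1 ω = -1} ω)
          * (muC P m {ω | B ω = true} {ω | D2 ω = 1} ω - muC P m {ω | B ω = true} {ω | D2 ω = -1} ω) ∂P := by
  classical
  set SA := {ω | A ω = true} with hSAdef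
  set SB := {ω | B ω = true} with hSBdef
  have hSA : MeasurableSet SA := hA (measurableSet_singleton true)
  have hSB : MeasurableSet SB := hB (measurableSet_singleton true)
  have hT1 : ∀ s : ℝ, MeasurableSet {ω | D1 ω = s} := fun s => hD1 (measurableSet_singleton s)
  have hT2 : ∀ t : ℝ, MeasurableSet {ω | D2 ω = t} := fun t => hD2 (measurableSet_singleton t)
  set g : ℝ → Ω → ℝ := fun s => cprob P m ({ω | D1 ω = s} ∩ SA) with hgdef
  set h : ℝ → Ω → ℝ := fun t => cprob P m ({ω | D2 ω = t} ∩ SB) with hhdef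
  have hint : ∀ s t : ℝ, Integrable (fun ω => g s ω * h t ω) P := fun s t =>
    (integrable_condExp).congr (hLOC s t)
  have hq : ∀ s t : ℝ, ∫ ω, g s ω * h t ω ∂P
      = (P (({ω | D1 ω = s} ∩ SA) ∩ ({ω | D2 ω = t} ∩ SB))).toReal := by
    intro s t
    rw [← integral_congr_ae (hLOC s t)]
    exact cprob_integral P hm (((hT1 s).inter hSA).inter ((hT2 t).inter hSB))
  -- RHS
  have hRHS : (∫ ω, (muC P m SA {ω | D1 ω = 1} ω - muC P m SA {ω | D1 ω = -1} ω)
      * (muC P m SB {ω | D2 ω = 1} ω - muC P m SB {ω | D2 ω = -1} ω) ∂P)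
      = (1 / (P SA).toReal) * ((1 / (P SB).toReal) *
        ((∫ ω, g 1 ω * h 1 ω ∂P) - (∫ ω, g 1 ω * h (-1) ω ∂P)
          - (∫ ω, g (-1) ω * h 1 ω ∂P) + (∫ ω, g (-1) ω * h (-1) ω ∂P))) := by
    have hfun : ∀ ω, (muC P m SA {ω | D1 ω = 1} ω - muC P m SA {ω | D1 ω = -1} ω)
        * (muC P m SB {ω | D2 ω = 1} ω - muC P m SB {ω | D2 ω = -1} ω)
        = (1 / (P SA).toReal) * ((1 / (P SB).toReal) *
          (g 1 ω * h 1 ω - g 1 ω * h (-1) ω - g (-1) ω * h 1 ω + g (-1) ω * h (-1) ω)) := by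
      intro ω
      simp only [muC, hgdef, hhdef]
      ring
    simp only [hfun]
    rw [integral_const_mul, integral_const_mul]
    congr 1
    congr 1
    have i1 : Integrable (fun ω => g 1 ω * h 1 ω - g 1 ω * h (-1) ω) P :=
      (hint 1 1).sub (hint 1 (-1))
    have i2 : Integrable (fun ω => g 1 ω * h 1 ω - g 1 ω * h (-1) ω - g (-1) ω * h 1 ω) P :=
      i1.sub (hint (-1) 1)
    rw [integral_add i2 (hint (-1) (-1)), integral_sub i1 (hint (-1) 1),
        integral_sub (hint 1 1) (hint 1 (-1))]
  -- LHS
  have hLHSint : ∀ s t : ℝ,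
      ∫ ω in SA ∩ SB, (({ω | D1 ω = s} ∩ {ω | D2 ω = t}).indicator (fun _ => (1:ℝ))) ω ∂P
        = (P (({ω | D1 ω = s} ∩ SA) ∩ ({ω | D2 ω = t} ∩ SB))).toReal := by
    intro s t
    rw [indicator_setint P _ ((hT1 s).inter (hT2 t))]
    congr 2
    ext ω
    simp only [Set.mem_inter_iff, Set.mem_setOf_eq]
    tauto
  have hpoint : ∀ ω, D1 ω * D2 ω =
      ({ω | D1 ω = 1} ∩ {ω | D2 ω = 1}).indicator (fun _ => (1:ℝ)) ω
      - ({ω | D1 ω = 1} ∩ {ω | D2 ω = -1}).indicator (fun _ => (1:ℝ)) ω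
      - ({ω | D1 ω = -1} ∩ {ω | D2 ω = 1}).indicator (fun _ => (1:ℝ)) ω
      + ({ω | D1 ω = -1} ∩ {ω | D2 ω = -1}).indicator (fun _ => (1:ℝ)) ω := by
    intro ω
    rcases hD1v ω with h1 | h1 <;> rcases hD2v ω with h2 | h2 <;>
      simp [Set.indicator_apply, Set.mem_inter_iff, Set.mem_setOf_eq, h1, h2] <;> norm_num
  have hii : ∀ s t : ℝ, Integrable
      (({ω | D1 ω = s} ∩ {ω | D2 ω = t}).indicator (fun _ => (1:ℝ))) (P.restrict (SA ∩ SB)) :=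
    fun s t => ((integrable_const (1:ℝ)).indicator ((hT1 s).inter (hT2 t))).restrict
  have hLHS : ∫ ω, D1 ω * D2 ω ∂(P[|SA ∩ SB])
      = ((P (SA ∩ SB))⁻¹).toReal *
        ((P (({ω | D1 ω = 1} ∩ SA) ∩ ({ω | D2 ω = 1} ∩ SB))).toReal
        - (P (({ω | D1 ω = 1} ∩ SA) ∩ ({ω | D2 ω = -1} ∩ SB))).toReal
        - (P (({ω | D1 ω = -1} ∩ SA) ∩ ({ω | D2 ω = 1} ∩ SB))).toReal
        + (P (({ω | D1 ω = -1} ∩ SA) ∩ ({ω | D2 ω = -1} ∩ SB))).toReal) := by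
    have hcond : P[|SA ∩ SB] = (P (SA ∩ SB))⁻¹ • P.restrict (SA ∩ SB) := rfl
    rw [hcond, integral_smul_measure, smul_eq_mul]
    congr 1
    rw [integral_congr_ae (ae_of_all _ hpoint)]
    have j1 : Integrable (fun a => ({ω | D1 ω = 1} ∩ {ω | D2 ω = 1}).indicator (fun _ => (1:ℝ)) a
        - ({ω | D1 ω = 1} ∩ {ω | D2 ω = -1}).indicator (fun _ => (1:ℝ)) a)
        (P.restrict (SA ∩ SB)) := (hii 1 1).sub (hii 1 (-1))
    have j2 : Integrable (fun a => ({ω | D1 ω = 1} ∩ {ω | D2 ω = 1}).indicator (fun _ => (1:ℝ)) a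
        - ({ω | D1 ω = 1} ∩ {ω | D2 ω = -1}).indicator (fun _ => (1:ℝ)) a
        - ({ω | D1 ω = -1} ∩ {ω | D2 ω = 1}).indicator (fun _ => (1:ℝ)) a)
        (P.restrict (SA ∩ SB)) := j1.sub (hii (-1) 1)
    rw [integral_add j2 (hii (-1) (-1)), integral_sub j1 (hii (-1) 1),
        integral_sub (hii 1 1) (hii 1 (-1)),
        hLHSint, hLHSint, hLHSint, hLHSint]
  have hPmul : P (SA ∩ SB) = P SA * P SB := by
    have := hE1.measure_inter_preimage_eq_mul (s := {true}) (t := {true})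
      (measurableSet_singleton _) (measurableSet_singleton _)
    exact this
  rw [hLHS, hRHS, hq, hq, hq, hq, hPmul, ENNReal.toReal_inv, ENNReal.toReal_mul]
  ring

/-- under (E1), (E2) and locality (LOC),
`E_{ab}(D1·D2) = ∫ 𝐚·𝐛 dP` where
`𝐚 = μ_{A=a}({D1=+1}|λ) − μ_{A=a}({D1=−1}|λ)` and
`𝐛 = μ_{B=b}({D2=+1}|λ) − μ_{B=b}({D2=−1}|λ)`.
Settings `a, a′` are modelled by `true, false : Bool` (likewise `b, b′`). -/
theorem stmt2 {Ω : Type*} [MeasurableSpace Ω] (P : Measure Ω) [IsProbabilityMeasure P]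
    {Λ : Type*} [MeasurableSpace Λ] (lam : Ω → Λ) (hlam : Measurable lam)
    (A B : Ω → Bool) (hA : Measurable A) (hB : Measurable B)
    (D1 D2 : Ω → ℝ) (hD1 : Measurable D1) (hD2 : Measurable D2)
    (hD1v : ∀ ω, D1 ω = 1 ∨ D1 ω = -1) (hD2v : ∀ ω, D2 ω = 1 ∨ D2 ω = -1)
    (hE1 : IndepFun A B P)
    (hE2 : 0 < P {ω | A ω = true} ∧ 0 < P {ω | A ω = false} ∧
           0 < P {ω | B ω = true} ∧ 0 < P {ω | B ω = false})
    (hLOC : ∀ E1 E2 : Set Ω,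
      MeasurableSet[MeasurableSpace.comap (fun ω => (D1 ω, A ω)) inferInstance] E1 →
      MeasurableSet[MeasurableSpace.comap (fun ω => (D2 ω, B ω)) inferInstance] E2 →
      cprob P (MeasurableSpace.comap lam inferInstance) (E1 ∩ E2) =ᵐ[P]
        fun ω => cprob P (MeasurableSpace.comap lam inferInstance) E1 ω *
          cprob P (MeasurableSpace.comap lam inferInstance) E2 ω) :
    ∫ ω, D1 ω * D2 ω ∂(P[|{ω | A ω = true} ∩ {ω | B ω = true}]) =
      ∫ ω, (muC P (MeasurableSpace.comap lam inferInstance) {ω | A ω = true} {ω | D1 ω = 1} ω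
            - muC P (MeasurableSpace.comap lam inferInstance) {ω | A ω = true} {ω | D1 ω = -1} ω)
          * (muC P (MeasurableSpace.comap lam inferInstance) {ω | B ω = true} {ω | D2 ω = 1} ω
            - muC P (MeasurableSpace.comap lam inferInstance) {ω | B ω = true} {ω | D2 ω = -1} ω) ∂P := by
  refine stmt2_aux P hlam.comap_le A B hA hB D1 D2 hD1 hD2 hD1v hD2v hE1 ?_
  intro s t
  refine hLOC _ _ ?_ ?_
  · exact ⟨{s} ×ˢ {true}, (measurableSet_singleton s).prod (measurableSet_singleton true),
      by ext ω; simp⟩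
  · exact ⟨{t} ×ˢ {true}, (measurableSet_singleton t).prod (measurableSet_singleton true),
      by ext ω; simp⟩
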